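/- Let b ≠ 0 and δ ∈ ℝ with |δ| ≤ 1, let l, m be non-negative integers, and let p ∈ [1, ∞]. Then there exists a constant C > 0 such that for all t ≥ 0, ‖∂ₓˡ ∂ₜᵐ χ(·,t)‖_{L^p} ≤ C|δ|(1+t)^{-(1/2)(1 − 1/p) − l/2 − m}, where χ is the nonlinear diffusion wave with mass δ. -/

import Mathlib

open MeasureTheory Real Filter intervalIntegral

noncomputable section

/-- Green function `S(x,t)` of the linearized generalized KdV–Burgers equation:
the inverse Fourier transform (in the convention `𝓕⁻¹[g](x) = (2π)^{-1/2} ∫ e^{ixξ} g(ξ) dξ`)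
of `ξ ↦ exp(-t ξ² + i t k ξ³)`. -/
def greenS (k t x : ℝ) : ℂ :=
  ((Real.sqrt (2 * Real.pi) : ℝ) : ℂ)⁻¹ *
    ∫ ξ : ℝ, Complex.exp (Complex.I * x * ξ) *
      Complex.exp (-(t : ℂ) * ξ ^ 2 + Complex.I * t * k * ξ ^ 3)

/-- Self-similar profile `χ_*` with mass `δ`. -/
def chiStar (b δ x : ℝ) : ℝ :=
  (1 / b) * ((Real.exp (b * δ / 2) - 1) * Real.exp (-x ^ 2 / 4)) /
    (Real.sqrt Real.pi + (Real.exp (b * δ / 2) - 1) * ∫ y in Set.Ioi (x / 2), Real.exp (-y ^ 2))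

/-- Nonlinear diffusion wave `χ(x,t) = (1+t)^{-1/2} χ_*(x/√(1+t))`. -/
def chi (b δ t x : ℝ) : ℝ := (1 + t) ^ (-(1 : ℝ) / 2) * chiStar b δ (x / Real.sqrt (1 + t))

/-- `η_*(x) = exp((b/2)∫_{-∞}^x χ_*(y) dy)`. -/
def etaStar (b δ x : ℝ) : ℝ := Real.exp ((b / 2) * ∫ y in Set.Iio x, chiStar b δ y)

/-- `η(x,t) = η_*(x/√(1+t)) = exp((b/2)∫_{-∞}^x χ(y,t) dy)`. -/
def etaFun (b δ t x : ℝ) : ℝ := etaStar b δ (x / Real.sqrt (1 + t))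

/-- Heat kernel `G(x,t)`. -/
def heatG (t x : ℝ) : ℝ := (Real.sqrt (4 * Real.pi * t))⁻¹ * Real.exp (-x ^ 2 / (4 * t))

/-- `U[h](x,t,τ) = ∫ ∂ₓ(G(x−y,t−τ)η(x,t)) η(y,τ)⁻¹ (∫_{-∞}^y h) dy`. -/
def Uker (b δ : ℝ) (h : ℝ → ℝ) (x t τ : ℝ) : ℝ :=
  ∫ y : ℝ, deriv (fun x' => heatG (t - τ) (x' - y) * etaFun b δ t x') x *
    (etaFun b δ τ y)⁻¹ * ∫ ξ in Set.Iio y, h ξ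

/-- Second asymptotic profile `Z(x,t)` with constants `cp = c_α⁺`, `cm = c_α⁻`. -/
def Zprof (b δ cp cm α : ℝ) (t x : ℝ) : ℝ :=
  ∫ y : ℝ, (if 0 ≤ y then cp else cm) *
    deriv (fun x' => heatG t (x' - y) * etaFun b δ t x') x * (1 + |y|) ^ (-(α - 1))

/-- `d = ∫ η_*(y)⁻¹ χ_*(y)³ dy`. -/
def dConst (b δ : ℝ) : ℝ := ∫ y : ℝ, (etaStar b δ y)⁻¹ * (chiStar b δ y) ^ 3

/-- `V_*(x) = (bχ_*(x) − x)e^{-x²/4} η_*(x)`. -/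
def Vstar (b δ x : ℝ) : ℝ := (b * chiStar b δ x - x) * Real.exp (-x ^ 2 / 4) * etaStar b δ x

/-- Second asymptotic profile `V(x,t)`. -/
def Vprof (b c k δ t x : ℝ) : ℝ :=
  -(dConst b δ / (4 * Real.sqrt Real.pi)) * (b ^ 2 * k / 8 + c / 3) *
    Vstar b δ (x / Real.sqrt (1 + t)) * (1 + t)⁻¹ * Real.log (1 + t)

/-- The mild (Duhamel) formulation of the generalized KdV–Burgers equation
`u_t + ((b/2)u² + (c/3)u³)_x + k u_{xxx} = u_{xx}`, `u(·,0) = u₀`. -/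
def IsMildSolution (b c k : ℝ) (u₀ : ℝ → ℝ) (u : ℝ → ℝ → ℝ) : Prop :=
  (∀ x, u 0 x = u₀ x) ∧
  ∀ t > (0 : ℝ), ∀ x : ℝ,
    (u t x : ℂ) = (∫ y : ℝ, greenS k t (x - y) * (u₀ y : ℂ)) -
      ∫ τ in (0 : ℝ)..t, ∫ y : ℝ,
        deriv (fun z => greenS k (t - τ) z) (x - y) *
          ((b / 2 : ℂ) * (u τ y : ℂ) ^ 2 + (c / 3 : ℂ) * (u τ y : ℂ) ^ 3)

/-- A global solution of the generalized KdV–Burgers equation in `C⁰([0,∞); Hˢ)`. -/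
def IsGlobalSolution (s : ℕ) (b c k : ℝ) (u₀ : ℝ → ℝ) (u : ℝ → ℝ → ℝ) : Prop :=
  (∀ t, 0 ≤ t → ContDiff ℝ s (u t) ∧ ∀ j ≤ s, MemLp (iteratedDeriv j (u t)) 2 volume) ∧
  Continuous (fun p : ℝ × ℝ => u p.1 p.2) ∧
  IsMildSolution b c k u₀ u

/-- `w₀(x) = exp(−(b/2)∫_{-∞}^x u₀) − exp(−(b/2)∫_{-∞}^x χ_*)`, with `δ = ∫ u₀`. -/
def w0 (b : ℝ) (u₀ : ℝ → ℝ) (x : ℝ) : ℝ :=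
  Real.exp (-(b / 2) * ∫ y in Set.Iio x, u₀ y) -
    Real.exp (-(b / 2) * ∫ y in Set.Iio x, chiStar b (∫ z : ℝ, u₀ z) y)

/-- `w(x,t) = exp(−(b/2)∫_{-∞}^x u(y,t)dy) − η(x,t)⁻¹`, with `δ = ∫ u₀`. -/
def wFun (b : ℝ) (u₀ : ℝ → ℝ) (u : ℝ → ℝ → ℝ) (t x : ℝ) : ℝ :=
  Real.exp (-(b / 2) * ∫ y in Set.Iio x, u t y) - (etaFun b (∫ y : ℝ, u₀ y) t x)⁻¹

end

noncomputable section


def gfun (y : ℝ) : ℝ := Real.exp (-y ^ 2)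

lemma gfun_cont : Continuous gfun := by unfold gfun; fun_prop

lemma gfun_integrable : Integrable gfun := by
  have := integrable_exp_neg_mul_sq (b := 1) one_pos
  unfold gfun; simpa [neg_mul, one_mul] using this

lemma gfun_nonneg : ∀ y, 0 ≤ gfun y := fun y => (Real.exp_pos _).le

def Hfun (s : ℝ) : ℝ := ∫ y in (0:ℝ)..s, gfun y

lemma Hfun_hasDerivAt (s : ℝ) : HasDerivAt Hfun (gfun s) s :=
  intervalIntegral.integral_hasDerivAt_right
    gfun_integrable.intervalIntegrable
    (gfun_cont.stronglyMeasurableAtFilter _ _) gfun_cont.continuousAt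

lemma Hfun_contDiff : ContDiff ℝ (⊤ : ℕ∞) Hfun := by
  rw [contDiff_infty_iff_deriv]
  constructor
  · exact fun s => (Hfun_hasDerivAt s).differentiableAt
  · have : deriv Hfun = gfun := funext fun s => (Hfun_hasDerivAt s).deriv
    rw [this]; unfold gfun; fun_prop

/-- the tail integral as function of `z` -/
def Efun (z : ℝ) : ℝ := ∫ y in Set.Ioi (z / 2), Real.exp (-y ^ 2)

lemma Efun_eq (z : ℝ) : Efun z = (∫ y in Set.Iic (0:ℝ), gfun y) + Hfun (-(z/2)) := by
  have h1 : Efun z = ∫ y in Set.Iic (-(z/2)), gfun y := by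
    rw [Efun, ← integral_comp_neg_Ioi]
    simp [gfun, neg_sq]
  rw [h1]
  have := intervalIntegral.integral_Iic_sub_Iic
    (gfun_integrable.integrableOn (s := Set.Iic (0:ℝ)))
    (gfun_integrable.integrableOn (s := Set.Iic (-(z/2))))
  unfold Hfun; linarith [this]

lemma neg_half_contDiff : ContDiff ℝ (⊤ : ℕ∞) (fun z : ℝ => -(z/2)) :=
  (contDiff_id.div_const 2).neg

lemma Efun_contDiff : ContDiff ℝ (⊤ : ℕ∞) Efun := by
  have : Efun = fun z => (∫ y in Set.Iic (0:ℝ), gfun y) + Hfun (-(z/2)) := funext Efun_eq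
  rw [this]
  exact contDiff_const.add (Hfun_contDiff.comp neg_half_contDiff)

lemma Efun_hasDerivAt (z : ℝ) :
    HasDerivAt Efun (-(1/2) * Real.exp (-z^2/4)) z := by
  have h1 : HasDerivAt (fun z : ℝ => -(z/2)) (-(1/2)) z := by
    exact ((hasDerivAt_id' z).div_const 2).neg
  have h2 := (Hfun_hasDerivAt (-(z/2))).comp z h1
  have h3 : HasDerivAt (fun z => (∫ y in Set.Iic (0:ℝ), gfun y) + Hfun (-(z/2)))
      (gfun (-(z/2)) * (-(1/2))) z := by
    simpa using h2.const_add (∫ y in Set.Iic (0:ℝ), gfun y)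
  have h4 : Efun = fun z => (∫ y in Set.Iic (0:ℝ), gfun y) + Hfun (-(z/2)) := funext Efun_eq
  rw [h4]
  convert h3 using 1
  unfold gfun
  rw [mul_comm]
  ring_nf

lemma Efun_nonneg (z : ℝ) : 0 ≤ Efun z :=
  setIntegral_nonneg measurableSet_Ioi fun y _ => (Real.exp_pos _).le

lemma Efun_le (z : ℝ) : Efun z ≤ Real.sqrt π := by
  have h := setIntegral_le_integral (s := Set.Ioi (z/2)) gfun_integrable
    (Filter.Eventually.of_forall gfun_nonneg)
  have h2 : ∫ y : ℝ, gfun y = Real.sqrt π := by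
    have := integral_gaussian 1
    simpa [gfun, neg_mul, one_mul] using this
  unfold Efun; unfold gfun at h h2; linarith


def aa (b δ : ℝ) : ℝ := Real.exp (b * δ / 2) - 1
def Dd (b δ z : ℝ) : ℝ := Real.sqrt π + aa b δ * Efun z
def Rr (b δ z : ℝ) : ℝ := Real.exp (-z ^ 2 / 4) / Dd b δ z

lemma aa_gt : -1 < aa b δ := by
  have := Real.exp_pos (b * δ / 2); unfold aa; linarith

lemma Dd_pos (b δ z : ℝ) : 0 < Dd b δ z := by
  have hπ : 0 < Real.sqrt π := Real.sqrt_pos.2 Real.pi_pos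
  rcases le_or_gt 0 (aa b δ) with h | h
  · have : 0 ≤ aa b δ * Efun z := mul_nonneg h (Efun_nonneg z)
    unfold Dd; linarith
  · have h1 : aa b δ * Real.sqrt π ≤ aa b δ * Efun z := by
      apply mul_le_mul_of_nonpos_left (Efun_le z) h.le
    have h2 : -1 < aa b δ := aa_gt
    have : Real.sqrt π + aa b δ * Real.sqrt π > 0 := by nlinarith
    unfold Dd; linarith

lemma Dd_lower (b δ z : ℝ) (hδ : |δ| ≤ 1) :
    Real.sqrt π * Real.exp (-(|b| / 2)) ≤ Dd b δ z := by
  have hπ : 0 < Real.sqrt π := Real.sqrt_pos.2 Real.pi_pos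
  have hbd : -(|b|) ≤ b * δ := by
    have h0 : |b| * |δ| ≤ |b| := mul_le_of_le_one_right (abs_nonneg b) hδ
    have h1 := neg_abs_le (b * δ)
    rw [abs_mul] at h1
    linarith
  have he : Real.exp (-(|b| / 2)) ≤ min 1 (Real.exp (b * δ / 2)) := by
    refine le_min ?_ (Real.exp_le_exp.2 (by linarith))
    exact Real.exp_le_one_iff.2 (neg_nonpos.2 (by positivity))
  rcases le_or_gt 0 (aa b δ) with h | h
  · have : 0 ≤ aa b δ * Efun z := mul_nonneg h (Efun_nonneg z)
    have h1 : Real.exp (-(|b| / 2)) ≤ 1 := (le_min_iff.1 he).1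
    unfold Dd; nlinarith
  · have h1 : aa b δ * Real.sqrt π ≤ aa b δ * Efun z :=
      mul_le_mul_of_nonpos_left (Efun_le z) h.le
    have h2 : Real.exp (-(|b|/2)) ≤ Real.exp (b * δ / 2) := (le_min_iff.1 he).2
    have : Real.sqrt π + aa b δ * Real.sqrt π = Real.sqrt π * Real.exp (b * δ / 2) := by
      unfold aa; ring
    unfold Dd; nlinarith

lemma Nn_contDiff : ContDiff ℝ (⊤ : ℕ∞) (fun z : ℝ => Real.exp (-z ^ 2 / 4)) := by
  have h : ContDiff ℝ (⊤ : ℕ∞) (fun z : ℝ => -z ^ 2 / 4) := (contDiff_id.pow 2).neg.div_const 4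
  exact Real.contDiff_exp.comp h

lemma Nn_hasDerivAt (z : ℝ) :
    HasDerivAt (fun z : ℝ => Real.exp (-z ^ 2 / 4)) (-(z/2) * Real.exp (-z ^ 2 / 4)) z := by
  have h1 : HasDerivAt (fun z : ℝ => -z ^ 2 / 4) (-(z/2)) z := by
    have := ((hasDerivAt_pow 2 z).neg).div_const 4
    simpa using this.congr_deriv (by ring)
  simpa [mul_comm] using h1.exp

lemma Dd_contDiff (b δ : ℝ) : ContDiff ℝ (⊤ : ℕ∞) (Dd b δ) :=
  contDiff_const.add (contDiff_const.mul Efun_contDiff)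

lemma Dd_hasDerivAt (b δ z : ℝ) :
    HasDerivAt (Dd b δ) (aa b δ * (-(1/2) * Real.exp (-z^2/4))) z := by
  show HasDerivAt (fun z => Real.sqrt π + aa b δ * Efun z) _ z
  simpa using ((Efun_hasDerivAt z).const_mul (aa b δ)).const_add (Real.sqrt π)

lemma Rr_contDiff (b δ : ℝ) : ContDiff ℝ (⊤ : ℕ∞) (Rr b δ) :=
  Nn_contDiff.div (Dd_contDiff b δ) (fun z => (Dd_pos b δ z).ne')

lemma Rr_hasDerivAt (b δ z : ℝ) :
    HasDerivAt (Rr b δ) (-(z/2) * Rr b δ z + aa b δ / 2 * Rr b δ z ^ 2) z := by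
  have h : HasDerivAt (fun z => Real.exp (-z ^ 2 / 4) / Dd b δ z) _ z :=
    (Nn_hasDerivAt z).div (Dd_hasDerivAt b δ z) (Dd_pos b δ z).ne'
  convert h using 1
  · rfl
  have hD := (Dd_pos b δ z).ne'
  simp only [Rr]
  field_simp
  ring

lemma Rr_pos (b δ z : ℝ) : 0 < Rr b δ z := div_pos (Real.exp_pos _) (Dd_pos b δ z)

lemma Rr_bound (b δ z : ℝ) (hδ : |δ| ≤ 1) :
    Rr b δ z ≤ Real.exp (|b| / 2) / Real.sqrt π * Real.exp (-z ^ 2 / 4) := by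
  have h1 := Dd_lower b δ z hδ
  have hπ : 0 < Real.sqrt π := Real.sqrt_pos.2 Real.pi_pos
  have hlb : 0 < Real.sqrt π * Real.exp (-(|b| / 2)) := by positivity
  have h2 : Rr b δ z ≤ Real.exp (-z ^ 2 / 4) / (Real.sqrt π * Real.exp (-(|b| / 2))) := by
    unfold Rr; gcongr
  calc Rr b δ z ≤ Real.exp (-z ^ 2 / 4) / (Real.sqrt π * Real.exp (-(|b| / 2))) := h2
    _ = Real.exp (|b| / 2) / Real.sqrt π * Real.exp (-z ^ 2 / 4) := by
        rw [Real.exp_neg]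
        field_simp

lemma abs_exp_sub_one_le (x : ℝ) : |Real.exp x - 1| ≤ |x| * Real.exp |x| := by
  rcases le_or_gt 0 x with h | h
  · rw [abs_of_nonneg h, abs_of_nonneg (by linarith [Real.one_le_exp h] : (0:ℝ) ≤ Real.exp x - 1)]
    have hh := Real.add_one_le_exp (-x)
    have h2 : (-x + 1) * Real.exp x ≤ Real.exp (-x) * Real.exp x :=
      mul_le_mul_of_nonneg_right hh (Real.exp_pos x).le
    have h3 : Real.exp (-x) * Real.exp x = 1 := by rw [← Real.exp_add]; simp
    nlinarith
  · rw [abs_of_neg h, abs_of_nonpos (by linarith [Real.exp_lt_one_iff.2 h] : Real.exp x - 1 ≤ 0)]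
    nlinarith [Real.add_one_le_exp x, Real.exp_pos (-x), Real.one_le_exp (by linarith : (0:ℝ) ≤ -x)]

lemma aa_abs_le (b δ : ℝ) (hδ : |δ| ≤ 1) :
    |aa b δ| ≤ |b| / 2 * Real.exp (|b| / 2) * |δ| := by
  have h := abs_exp_sub_one_le (b * δ / 2)
  have h1 : |b * δ / 2| = |b| * |δ| / 2 := by rw [abs_div, abs_mul]; simp
  have h2 : |b * δ / 2| ≤ |b| / 2 := by
    rw [h1]; nlinarith [abs_nonneg b, abs_nonneg δ]
  have h3 : Real.exp |b * δ / 2| ≤ Real.exp (|b| / 2) := Real.exp_le_exp.2 h2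
  calc |aa b δ| ≤ |b * δ / 2| * Real.exp |b * δ / 2| := h
    _ ≤ |b * δ / 2| * Real.exp (|b| / 2) := by
        exact mul_le_mul_of_nonneg_left h3 (abs_nonneg _)
    _ = |b| * |δ| / 2 * Real.exp (|b| / 2) := by rw [h1]
    _ = |b| / 2 * Real.exp (|b| / 2) * |δ| := by ring

inductive Expr (b : ℝ) : (ℝ → ℝ → ℝ) → Prop
  | const (c : ℝ) : Expr b fun _ _ => c
  | zvar : Expr b fun _ z => z
  | avar : Expr b fun δ _ => aa b δ
  | rvar : Expr b fun δ z => Rr b δ z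
  | add {f g} : Expr b f → Expr b g → Expr b fun δ z => f δ z + g δ z
  | mul {f g} : Expr b f → Expr b g → Expr b fun δ z => f δ z * g δ z

lemma Expr.contDiff {b : ℝ} {f} (h : Expr b f) (δ : ℝ) : ContDiff ℝ (⊤ : ℕ∞) (f δ) := by
  induction h with
  | const c => exact contDiff_const
  | zvar => exact contDiff_id
  | avar => exact contDiff_const
  | rvar => exact Rr_contDiff b δ
  | add hf hg ihf ihg => exact ihf.add ihg
  | mul hf hg ihf ihg => exact ihf.mul ihg

lemma Expr.hasDeriv {b : ℝ} {f} (h : Expr b f) :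
    ∃ g, Expr b g ∧ ∀ δ z, HasDerivAt (f δ) (g δ z) z := by
  induction h with
  | const c => exact ⟨_, Expr.const 0, fun δ z => hasDerivAt_const z c⟩
  | zvar => exact ⟨_, Expr.const 1, fun δ z => hasDerivAt_id z⟩
  | avar => exact ⟨_, Expr.const 0, fun δ z => hasDerivAt_const z _⟩
  | rvar =>
      refine ⟨fun δ z => (-(1/2:ℝ)) * z * Rr b δ z + aa b δ * (1/2) * (Rr b δ z * Rr b δ z), ?_, ?_⟩
      · exact Expr.add (Expr.mul (Expr.mul (Expr.const _) Expr.zvar) Expr.rvar)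
          (Expr.mul (Expr.mul Expr.avar (Expr.const _)) (Expr.mul Expr.rvar Expr.rvar))
      · intro δ z
        have := Rr_hasDerivAt b δ z
        convert this using 1
        ring
  | add hf hg ihf ihg =>
      obtain ⟨f', hf', hdf⟩ := ihf
      obtain ⟨g', hg', hdg⟩ := ihg
      exact ⟨_, Expr.add hf' hg', fun δ z => (hdf δ z).add (hdg δ z)⟩
  | @mul f g hf hg ihf ihg =>
      obtain ⟨f', hf', hdf⟩ := ihf
      obtain ⟨g', hg', hdg⟩ := ihg
      refine ⟨fun δ z => f' δ z * g δ z + f δ z * g' δ z, ?_, ?_⟩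
      · exact Expr.add (Expr.mul hf' hg) (Expr.mul hf hg')
      · exact fun δ z => (hdf δ z).mul (hdg δ z)

lemma Expr.bound {b : ℝ} {f} (h : Expr b f) :
    ∃ C > (0:ℝ), ∃ n : ℕ, ∀ δ, |δ| ≤ 1 → ∀ z, |f δ z| ≤ C * (1 + z ^ 2) ^ n := by
  induction h with
  | const c =>
      exact ⟨|c| + 1, by positivity, 0, fun δ _ z => by
        simp only [pow_zero, mul_one]; linarith [abs_nonneg c]⟩
  | zvar =>
      refine ⟨1, one_pos, 1, fun δ _ z => ?_⟩
      rw [one_mul, pow_one]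
      nlinarith [abs_nonneg z, sq_abs z, sq_nonneg (|z| - 1)]
  | avar =>
      refine ⟨|b| / 2 * Real.exp (|b| / 2) + 1, by positivity, 0, fun δ hδ z => ?_⟩
      have h1 := aa_abs_le b δ hδ
      have h2 : |b| / 2 * Real.exp (|b| / 2) * |δ| ≤ |b| / 2 * Real.exp (|b| / 2) * 1 :=
        mul_le_mul_of_nonneg_left hδ (by positivity)
      simp only [pow_zero, mul_one]; linarith
  | rvar =>
      refine ⟨Real.exp (|b| / 2) / Real.sqrt π + 1, by positivity, 0, fun δ hδ z => ?_⟩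
      have h1 := Rr_bound b δ z hδ
      have h2 : Real.exp (-z ^ 2 / 4) ≤ 1 := Real.exp_le_one_iff.2 (by nlinarith [sq_nonneg z])
      have h3 := (Rr_pos b δ z).le
      have h4 : (0:ℝ) ≤ Real.exp (|b| / 2) / Real.sqrt π := by positivity
      rw [abs_of_nonneg h3]
      simp only [pow_zero, mul_one]
      nlinarith
  | @add f g hf hg ihf ihg =>
      obtain ⟨C1, hC1, n1, h1⟩ := ihf
      obtain ⟨C2, hC2, n2, h2⟩ := ihg
      refine ⟨C1 + C2, by positivity, max n1 n2, fun δ hδ z => ?_⟩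
      have hb1 : (1:ℝ) ≤ 1 + z ^ 2 := by nlinarith [sq_nonneg z]
      have e1 : (1 + z ^ 2) ^ n1 ≤ (1 + z ^ 2) ^ (max n1 n2) :=
        pow_le_pow_right₀ hb1 (le_max_left _ _)
      have e2 : (1 + z ^ 2) ^ n2 ≤ (1 + z ^ 2) ^ (max n1 n2) :=
        pow_le_pow_right₀ hb1 (le_max_right _ _)
      calc |f δ z + g δ z| ≤ |f δ z| + |g δ z| := abs_add_le _ _
        _ ≤ C1 * (1 + z ^ 2) ^ (max n1 n2) + C2 * (1 + z ^ 2) ^ (max n1 n2) := by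
            have := h1 δ hδ z; have := h2 δ hδ z
            nlinarith [mul_le_mul_of_nonneg_left e1 hC1.le, mul_le_mul_of_nonneg_left e2 hC2.le]
        _ = (C1 + C2) * (1 + z ^ 2) ^ (max n1 n2) := by ring
  | @mul f g hf hg ihf ihg =>
      obtain ⟨C1, hC1, n1, h1⟩ := ihf
      obtain ⟨C2, hC2, n2, h2⟩ := ihg
      refine ⟨C1 * C2, by positivity, n1 + n2, fun δ hδ z => ?_⟩
      have hb1 : (0:ℝ) ≤ (1 + z ^ 2) := by nlinarith [sq_nonneg z]
      rw [abs_mul, pow_add]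
      calc |f δ z| * |g δ z| ≤ (C1 * (1 + z ^ 2) ^ n1) * (C2 * (1 + z ^ 2) ^ n2) :=
            mul_le_mul (h1 δ hδ z) (h2 δ hδ z) (abs_nonneg _) (by positivity)
        _ = C1 * C2 * ((1 + z ^ 2) ^ n1 * (1 + z ^ 2) ^ n2) := by ring

/-- `f` is of the form `a · R · (polynomial expression)`. -/
def Good (b : ℝ) (f : ℝ → ℝ → ℝ) : Prop :=
  ∃ g, Expr b g ∧ ∀ δ z, f δ z = aa b δ * Rr b δ z * g δ z

lemma Good.contDiff {b f} (h : Good b f) (δ : ℝ) : ContDiff ℝ (⊤ : ℕ∞) (f δ) := by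
  obtain ⟨g, hg, hfg⟩ := h
  have : f δ = fun z => aa b δ * Rr b δ z * g δ z := funext (hfg δ)
  rw [this]
  exact (contDiff_const.mul (Rr_contDiff b δ)).mul (hg.contDiff δ)

lemma Good.hasDeriv {b f} (h : Good b f) :
    ∃ f', Good b f' ∧ ∀ δ z, HasDerivAt (f δ) (f' δ z) z := by
  obtain ⟨g, hg, hfg⟩ := h
  obtain ⟨g', hg', hdg⟩ := hg.hasDeriv
  refine ⟨fun δ z => aa b δ * Rr b δ z *
      ((-(1/2:ℝ) * z + aa b δ * (1/2) * Rr b δ z) * g δ z + g' δ z), ?_, ?_⟩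
  · exact ⟨_, Expr.add (Expr.mul (Expr.add (Expr.mul (Expr.const _) Expr.zvar)
      (Expr.mul (Expr.mul Expr.avar (Expr.const _)) Expr.rvar)) hg) hg', fun δ z => rfl⟩
  · intro δ z
    have h1 : HasDerivAt (fun z => aa b δ * Rr b δ z * g δ z)
        ((aa b δ * (-(z/2) * Rr b δ z + aa b δ / 2 * Rr b δ z ^ 2)) * g δ z
          + aa b δ * Rr b δ z * g' δ z) z :=
      (((Rr_hasDerivAt b δ z).const_mul (aa b δ)).mul (hdg δ z))
    have h2 : f δ = fun z => aa b δ * Rr b δ z * g δ z := funext (hfg δ)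
    rw [h2]
    convert h1 using 1
    ring

lemma Good.add {b f g} (hf : Good b f) (hg : Good b g) :
    Good b (fun δ z => f δ z + g δ z) := by
  obtain ⟨F, hF, hfF⟩ := hf
  obtain ⟨G, hG, hgG⟩ := hg
  exact ⟨_, Expr.add hF hG, fun δ z => by show f δ z + g δ z = _; rw [hfF, hgG]; ring⟩

lemma Good.const_mul {b f} (c : ℝ) (hf : Good b f) : Good b (fun δ z => c * f δ z) := by
  obtain ⟨F, hF, hfF⟩ := hf
  exact ⟨_, Expr.mul (Expr.const c) hF, fun δ z => by show c * f δ z = _; rw [hfF]; ring⟩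

lemma Good.z_mul {b f} (hf : Good b f) : Good b (fun δ z => z * f δ z) := by
  obtain ⟨F, hF, hfF⟩ := hf
  exact ⟨_, Expr.mul Expr.zvar hF, fun δ z => by show z * f δ z = _; rw [hfF]; ring⟩

lemma Good.deriv {b f} (hf : Good b f) : Good b (fun δ z => _root_.deriv (f δ) z) := by
  obtain ⟨f', hf', hd⟩ := hf.hasDeriv
  have : (fun δ z => _root_.deriv (f δ) z) = f' := by
    funext δ z; exact (hd δ z).deriv
  rw [this]; exact hf'

lemma Good.iteratedDeriv {b f} (hf : Good b f) (l : ℕ) :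
    Good b (fun δ z => _root_.iteratedDeriv l (f δ) z) := by
  induction l generalizing f with
  | zero => simpa [_root_.iteratedDeriv_zero] using hf
  | succ l ih =>
      have h1 : (fun δ z => _root_.iteratedDeriv (l+1) (f δ) z)
          = fun δ z => _root_.iteratedDeriv l (_root_.deriv (f δ)) z := by
        funext δ z; rw [iteratedDeriv_succ']
      rw [h1]
      exact ih hf.deriv

lemma poly_le_exp (n : ℕ) :
    ∃ K > (0:ℝ), ∀ z : ℝ, (1 + z ^ 2) ^ n ≤ K * Real.exp (z ^ 2 / 8) := by
  refine ⟨(16 * (n + 1)) ^ n, by positivity, fun z => ?_⟩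
  set u := z ^ 2 with hu
  have hu0 : 0 ≤ u := sq_nonneg z
  have hbase : 1 + u ≤ 16 * (n + 1) * Real.exp (u / (8 * (n + 1))) := by
    have h1 := Real.add_one_le_exp (u / (8 * (n + 1)))
    have hn : (0:ℝ) < 8 * (n + 1) := by positivity
    have h2 : 16 * ((n:ℝ) + 1) * (u / (8 * (n + 1)) + 1) ≥ 1 + u := by
      rw [ge_iff_le, mul_add, mul_one]
      have : 16 * ((n:ℝ) + 1) * (u / (8 * (n + 1))) = 2 * u := by
        field_simp; ring
      rw [this]
      have : (1:ℝ) ≤ 16 * ((n:ℝ)+1) := by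
        have : (0:ℝ) ≤ (n:ℝ) := Nat.cast_nonneg n
        linarith
      linarith
    calc 1 + u ≤ 16 * ((n:ℝ) + 1) * (u / (8 * (n + 1)) + 1) := h2
      _ ≤ 16 * (n + 1) * Real.exp (u / (8 * (n + 1))) := by
          apply mul_le_mul_of_nonneg_left h1 (by positivity)
  have hpow : (1 + u) ^ n ≤ (16 * ((n:ℝ) + 1) * Real.exp (u / (8 * (n + 1)))) ^ n :=
    pow_le_pow_left₀ (by linarith) hbase n
  have hexp : (Real.exp (u / (8 * (n + 1)))) ^ n = Real.exp (n * (u / (8 * (n + 1)))) := by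
    rw [← Real.exp_nat_mul]
  have hle : (n:ℝ) * (u / (8 * (n + 1))) ≤ u / 8 := by
    have hn : (0:ℝ) < (n:ℝ) + 1 := by positivity
    have he : (n:ℝ) * (u / (8 * ((n:ℝ) + 1))) = ((n:ℝ) * u) / (8 * ((n:ℝ) + 1)) := by ring
    rw [he, div_le_div_iff₀ (by positivity) (by norm_num : (0:ℝ) < 8)]
    nlinarith [Nat.cast_nonneg (α := ℝ) n]
  calc (1 + u) ^ n ≤ (16 * ((n:ℝ) + 1)) ^ n * (Real.exp (u / (8 * (n + 1)))) ^ n := by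
        rw [← mul_pow]; exact hpow
    _ ≤ (16 * ((n:ℝ) + 1)) ^ n * Real.exp (u / 8) := by
        rw [hexp]
        exact mul_le_mul_of_nonneg_left (Real.exp_le_exp.2 hle) (by positivity)
    _ = (16 * ((n:ℝ) + 1)) ^ n * Real.exp (u / 8) := rfl

lemma Good.bound {b f} (hf : Good b f) :
    ∃ C > (0:ℝ), ∀ δ, |δ| ≤ 1 → ∀ z, |f δ z| ≤ C * |δ| * Real.exp (-z ^ 2 / 8) := by
  obtain ⟨g, hg, hfg⟩ := hf
  obtain ⟨Cg, hCg, n, hgb⟩ := hg.bound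
  obtain ⟨K, hK, hKb⟩ := poly_le_exp n
  set Ca := |b| / 2 * Real.exp (|b| / 2) with hCa
  set CR := Real.exp (|b| / 2) / Real.sqrt π with hCR
  have hCR0 : 0 < CR := by rw [hCR]; positivity
  have hCa0 : 0 ≤ Ca := by rw [hCa]; positivity
  refine ⟨(Ca + 1) * CR * Cg * K, by positivity, fun δ hδ z => ?_⟩
  have h1 : |aa b δ| ≤ (Ca + 1) * |δ| := by
    have := aa_abs_le b δ hδ
    nlinarith [abs_nonneg δ]
  have h2 : |Rr b δ z| ≤ CR * Real.exp (-z ^ 2 / 4) := by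
    rw [abs_of_pos (Rr_pos b δ z)]; exact Rr_bound b δ z hδ
  have h3 : |g δ z| ≤ Cg * (1 + z ^ 2) ^ n := hgb δ hδ z
  have key : Real.exp (-z ^ 2 / 4) * (1 + z ^ 2) ^ n ≤ K * Real.exp (-z ^ 2 / 8) := by
    have := hKb z
    have hpos : (0:ℝ) < Real.exp (-z ^ 2 / 4) := Real.exp_pos _
    have h4 : Real.exp (-z ^ 2 / 4) * (1 + z ^ 2) ^ n
        ≤ Real.exp (-z ^ 2 / 4) * (K * Real.exp (z ^ 2 / 8)) :=
      mul_le_mul_of_nonneg_left this hpos.le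
    have h5 : Real.exp (-z ^ 2 / 4) * Real.exp (z ^ 2 / 8) = Real.exp (-z ^ 2 / 8) := by
      rw [← Real.exp_add]; ring_nf
    calc Real.exp (-z ^ 2 / 4) * (1 + z ^ 2) ^ n
        ≤ Real.exp (-z ^ 2 / 4) * (K * Real.exp (z ^ 2 / 8)) := h4
      _ = K * (Real.exp (-z ^ 2 / 4) * Real.exp (z ^ 2 / 8)) := by ring
      _ = K * Real.exp (-z ^ 2 / 8) := by rw [h5]
  rw [hfg δ z, abs_mul, abs_mul]
  have hnn : (0:ℝ) ≤ (1 + z^2)^n := by positivity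
  calc |aa b δ| * |Rr b δ z| * |g δ z|
      ≤ ((Ca + 1) * |δ|) * (CR * Real.exp (-z ^ 2 / 4)) * (Cg * (1 + z ^ 2) ^ n) := by
        apply mul_le_mul (mul_le_mul h1 h2 (abs_nonneg _) (by positivity)) h3 (abs_nonneg _)
        positivity
    _ = (Ca + 1) * CR * Cg * |δ| * (Real.exp (-z ^ 2 / 4) * (1 + z ^ 2) ^ n) := by ring
    _ ≤ (Ca + 1) * CR * Cg * |δ| * (K * Real.exp (-z ^ 2 / 8)) := by
        apply mul_le_mul_of_nonneg_left key (by positivity)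
    _ = (Ca + 1) * CR * Cg * K * |δ| * Real.exp (-z ^ 2 / 8) := by ring

lemma Good.congr {b f g} (hf : Good b f) (h : ∀ δ z, g δ z = f δ z) : Good b g := by
  obtain ⟨F, hF, hfF⟩ := hf
  exact ⟨F, hF, fun δ z => by rw [h δ z]; exact hfF δ z⟩

lemma chiStar_eq (b δ z : ℝ) : chiStar b δ z = aa b δ * Rr b δ z * (1 / b) := by
  unfold chiStar Rr Dd aa Efun
  ring

lemma good_chiStar (b : ℝ) : Good b (fun δ z => chiStar b δ z) :=
  ⟨fun _ _ => 1 / b, Expr.const _, fun δ z => by show chiStar b δ z = _; rw [chiStar_eq]⟩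

def psi (b : ℝ) : ℕ → ℝ → ℝ → ℝ
  | 0 => fun δ z => chiStar b δ z
  | m + 1 => fun δ z =>
      (-(1/2) - m) * psi b m δ z + (-(1/2)) * (z * deriv (psi b m δ) z)

lemma good_psi (b : ℝ) (m : ℕ) : Good b (psi b m) := by
  induction m with
  | zero => exact good_chiStar b
  | succ m ih =>
      have h1 : Good b (fun δ z => (-(1/2:ℝ) - m) * psi b m δ z) := ih.const_mul _
      have h2 : Good b (fun δ z => (-(1/2:ℝ)) * (z * deriv (psi b m δ) z)) :=
        (ih.deriv.z_mul).const_mul _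
      exact (h1.add h2).congr fun δ z => by rfl

lemma psi_contDiff (b δ : ℝ) (m : ℕ) : ContDiff ℝ (⊤ : ℕ∞) (psi b m δ) := by
  have := (good_psi b m).contDiff δ
  exact this

/-- time derivative structure lemma -/
lemma time_deriv (b δ x : ℝ) (m : ℕ) :
    ∀ t : ℝ, -1 < t →
      iteratedDeriv m (fun t' => chi b δ t' x) t
        = (1 + t) ^ (-(1/2 : ℝ) - m) * psi b m δ (x / Real.sqrt (1 + t)) := by
  induction m with
  | zero =>
      intro t ht
      rw [iteratedDeriv_zero]
      show chi b δ t x = _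
      unfold chi
      norm_num [psi]
  | succ m ih =>
      intro t ht
      rw [iteratedDeriv_succ]
      have hmem : Set.Ioi (-1:ℝ) ∈ nhds t := isOpen_Ioi.mem_nhds ht
      have hev : (iteratedDeriv m (fun t' => chi b δ t' x))
          =ᶠ[nhds t] fun t' => (1 + t') ^ (-(1/2 : ℝ) - m) * psi b m δ (x / Real.sqrt (1 + t')) :=
        Filter.eventually_of_mem hmem fun y hy => ih y hy
      rw [hev.deriv_eq]
      -- now compute the derivative of the RHS
      have h1t : (0:ℝ) < 1 + t := by linarith
      set σ := Real.sqrt (1 + t) with hσ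
      have hσpos : 0 < σ := Real.sqrt_pos.2 h1t
      have hσsq : σ ^ 2 = 1 + t := Real.sq_sqrt h1t.le
      set c : ℝ := -(1/2 : ℝ) - m with hc
      have hone : HasDerivAt (fun t' : ℝ => 1 + t') 1 t := by
        simpa using (hasDerivAt_id t).const_add 1
      have hpow : HasDerivAt (fun t' : ℝ => (1 + t') ^ c) (c * (1 + t) ^ (c - 1)) t := by
        have h := Real.hasDerivAt_rpow_const (x := 1 + t) (p := c) (Or.inl h1t.ne')
        exact (h.comp t hone).congr_deriv (mul_one _)
      have hsqrt : HasDerivAt (fun t' : ℝ => Real.sqrt (1 + t')) (1 / (2 * σ)) t := by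
        have h := Real.hasDerivAt_sqrt (x := 1 + t) h1t.ne'
        exact (h.comp t hone).congr_deriv (mul_one _)
      have hdiv : HasDerivAt (fun t' : ℝ => x / Real.sqrt (1 + t'))
          ((0 * σ - x * (1 / (2 * σ))) / σ ^ 2) t :=
        (hasDerivAt_const t x).div hsqrt hσpos.ne'
      have hψ : HasDerivAt (psi b m δ) (deriv (psi b m δ) (x / σ)) (x / σ) :=
        (((psi_contDiff b δ m).differentiable (by simp)).differentiableAt).hasDerivAt
      have hcomp : HasDerivAt (fun t' : ℝ => psi b m δ (x / Real.sqrt (1 + t')))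
          (deriv (psi b m δ) (x / σ) * ((0 * σ - x * (1 / (2 * σ))) / σ ^ 2)) t :=
        hψ.comp t hdiv
      have hprod : HasDerivAt (fun t' => (1 + t') ^ c * psi b m δ (x / Real.sqrt (1 + t'))) _ t :=
        hpow.mul hcomp
      rw [hprod.deriv]
      -- final algebra
      have hcast : (-(1/2 : ℝ) - (m + 1 : ℕ)) = c - 1 := by push_cast [hc]; ring
      rw [hcast]
      have hrw : (1 + t) ^ (c - 1) = (1 + t) ^ c / (1 + t) := by
        rw [Real.rpow_sub h1t, Real.rpow_one]
      show c * (1 + t) ^ (c-1) * psi b m δ (x / σ)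
          + (1 + t) ^ c * (deriv (psi b m δ) (x / σ) * ((0 * σ - x * (1 / (2 * σ))) / σ ^ 2))
        = (1 + t) ^ (c-1) * ((-(1/2) - m) * psi b m δ (x / σ)
            + (-(1/2)) * (x / σ * deriv (psi b m δ) (x / σ)))
      rw [hrw, hσsq]
      have hcm : c = -(1/2 : ℝ) - m := hc
      field_simp
      rw [hcm]
      nlinarith [sq_nonneg σ, hσsq, mul_pos hσpos hσpos]

lemma iterated_scale (σ : ℝ) (hσ : σ ≠ 0) :
    ∀ (l : ℕ) (g : ℝ → ℝ), ContDiff ℝ (⊤ : ℕ∞) g → ∀ (A x : ℝ),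
      iteratedDeriv l (fun x' => A * g (x' / σ)) x = A * σ⁻¹ ^ l * iteratedDeriv l g (x / σ) := by
  intro l
  induction l with
  | zero => intro g hg A x; simp [iteratedDeriv_zero]
  | succ l ih =>
      intro g hg A x
      rw [iteratedDeriv_succ']
      have hder : (deriv fun x' => A * g (x' / σ)) = fun x' => A * σ⁻¹ * deriv g (x' / σ) := by
        funext x'
        have hin : HasDerivAt (fun x' : ℝ => x' / σ) (1 / σ) x' := by
          simpa using (hasDerivAt_id x').div_const σ
        have hg' : HasDerivAt g (deriv g (x' / σ)) (x' / σ) :=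
          ((hg.differentiable (by simp)).differentiableAt).hasDerivAt
        have hD : HasDerivAt (fun x' : ℝ => A * g (x' / σ))
            (A * (deriv g (x' / σ) * (1 / σ))) x' := (hg'.comp x' hin).const_mul A
        rw [hD.deriv]
        field_simp
      rw [hder]
      have hg' : ContDiff ℝ (⊤ : ℕ∞) (deriv g) := (contDiff_infty_iff_deriv.1 hg).2
      rw [ih (deriv g) hg' (A * σ⁻¹) x]
      rw [← iteratedDeriv_succ']
      ring

lemma key_eLpNorm (f : ℝ → ℝ) (M σ : ℝ) (hM : 0 ≤ M) (hσ : 1 ≤ σ)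
    (hf : ∀ x, |f x| ≤ M * Real.exp (-x ^ 2 / (8 * σ ^ 2)))
    (p : ENNReal) (hp : 1 ≤ p) :
    eLpNorm f p volume
      ≤ ENNReal.ofReal (M * Real.sqrt (8 * π) * σ ^ ((1/p).toReal)) := by
  have hσ0 : 0 < σ := lt_of_lt_of_le one_pos hσ
  have hsq : (1:ℝ) ≤ Real.sqrt (8 * π) := by
    rw [show (1:ℝ) = Real.sqrt 1 by simp]
    exact Real.sqrt_le_sqrt (by nlinarith [Real.pi_gt_three])
  by_cases hptop : p = ⊤
  · subst hptop
    rw [eLpNorm_exponent_top]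
    have h1 : ∀ᵐ x : ℝ, ‖f x‖ ≤ M := by
      refine Filter.Eventually.of_forall fun x => ?_
      have h2 := hf x
      have he : Real.exp (-x ^ 2 / (8 * σ ^ 2)) ≤ 1 :=
        Real.exp_le_one_iff.2
          (div_nonpos_of_nonpos_of_nonneg (by nlinarith [sq_nonneg x]) (by positivity))
      rw [Real.norm_eq_abs]
      nlinarith [abs_nonneg (f x)]
    refine (eLpNormEssSup_le_of_ae_bound h1).trans ?_
    apply ENNReal.ofReal_le_ofReal
    rw [show ((1:ENNReal)/⊤).toReal = 0 by simp, Real.rpow_zero, mul_one]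
    nlinarith [mul_le_mul_of_nonneg_left hsq hM]
  · have hp0 : p ≠ 0 := by intro h; rw [h] at hp; exact absurd hp (by simp)
    set q := p.toReal with hq
    have hq1 : 1 ≤ q := by
      rw [hq, ← ENNReal.toReal_one]
      exact ENNReal.toReal_mono hptop hp
    have hq0 : 0 < q := lt_of_lt_of_le one_pos hq1
    have hpq : ((1:ENNReal)/p).toReal = 1/q := by
      rw [one_div, ENNReal.toReal_inv, hq, one_div]
    rw [eLpNorm_eq_lintegral_rpow_enorm_toReal hp0 hptop, hpq]
    set g : ℝ → ℝ := fun x => M ^ q * Real.exp (-(q / (8 * σ ^ 2)) * x ^ 2) with hg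
    have hgint : Integrable g := by
      apply Integrable.const_mul
      exact integrable_exp_neg_mul_sq (by positivity)
    have hbound : ∀ x : ℝ, (‖f x‖₊ : ENNReal) ^ q ≤ ENNReal.ofReal (g x) := by
      intro x
      have h1 : (‖f x‖₊ : ENNReal) = ENNReal.ofReal |f x| := by
        rw [← Real.norm_eq_abs, ofReal_norm, enorm_eq_nnnorm]
      rw [h1, ENNReal.ofReal_rpow_of_nonneg (abs_nonneg _) hq0.le]
      apply ENNReal.ofReal_le_ofReal
      have h2 : |f x| ^ q ≤ (M * Real.exp (-x ^ 2 / (8 * σ ^ 2))) ^ q :=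
        Real.rpow_le_rpow (abs_nonneg _) (hf x) hq0.le
      refine h2.trans_eq ?_
      rw [Real.mul_rpow hM (Real.exp_pos _).le, ← Real.exp_mul, hg]
      ring_nf
    have h6 : Real.sqrt (8 * π) ≤ (Real.sqrt (8 * π)) ^ q := by
      have := Real.rpow_le_rpow_of_exponent_le hsq hq1
      simpa using this
    have hval : Real.sqrt (π / (q / (8 * σ ^ 2))) ≤ σ * Real.sqrt (8 * π) := by
      rw [show π / (q / (8 * σ ^ 2)) = (8 * π) * σ ^ 2 / q by field_simp]
      have h1 : (8 * π) * σ ^ 2 / q ≤ (8 * π) * σ ^ 2 :=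
        div_le_self (by positivity) hq1
      refine (Real.sqrt_le_sqrt h1).trans ?_
      rw [mul_comm (8 * π) (σ ^ 2), Real.sqrt_mul (by positivity), Real.sqrt_sq hσ0.le]
    have e1 : (M * Real.sqrt (8 * π) * σ ^ ((1:ℝ)/q)) ^ q
        = M ^ q * (Real.sqrt (8 * π)) ^ q * σ := by
      rw [Real.mul_rpow (by positivity) (by positivity),
          Real.mul_rpow hM (Real.sqrt_nonneg _),
          ← Real.rpow_mul hσ0.le, one_div, inv_mul_cancel₀ hq0.ne', Real.rpow_one]
    have hgle : ∫ x, g x ≤ (M * Real.sqrt (8 * π) * σ ^ ((1:ℝ)/q)) ^ q := by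
      have hint : ∫ x, g x = M ^ q * Real.sqrt (π / (q / (8 * σ ^ 2))) := by
        rw [hg, MeasureTheory.integral_const_mul, integral_gaussian]
      rw [hint, e1]
      have hMq : (0:ℝ) ≤ M ^ q := Real.rpow_nonneg hM q
      nlinarith [Real.sqrt_nonneg (8 * π), mul_le_mul_of_nonneg_left hval hMq,
        mul_le_mul_of_nonneg_right h6 hσ0.le]
    calc (∫⁻ x, (‖f x‖₊ : ENNReal) ^ q) ^ (1 / q)
        ≤ (∫⁻ x, ENNReal.ofReal (g x)) ^ (1 / q) :=
          ENNReal.rpow_le_rpow (lintegral_mono hbound) (by positivity)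
      _ = (ENNReal.ofReal (∫ x, g x)) ^ (1 / q) := by
          rw [MeasureTheory.ofReal_integral_eq_lintegral_ofReal hgint
            (Filter.Eventually.of_forall fun x => by positivity)]
      _ ≤ (ENNReal.ofReal ((M * Real.sqrt (8 * π) * σ ^ ((1:ℝ)/q)) ^ q)) ^ (1 / q) :=
          ENNReal.rpow_le_rpow (ENNReal.ofReal_le_ofReal hgle) (by positivity)
      _ = ENNReal.ofReal (M * Real.sqrt (8 * π) * σ ^ ((1:ℝ)/q)) := by
          rw [ENNReal.ofReal_rpow_of_nonneg (by positivity) (by positivity),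
            ← Real.rpow_mul (by positivity), mul_one_div, div_self hq0.ne', Real.rpow_one]

end

/-- Lemma 2.4 (first part): for `p ∈ [1,∞]`,
`‖∂ₓˡ∂ₜᵐ χ(·,t)‖_{L^p} ≤ C|δ|(1+t)^{-(1/2)(1-1/p) - l/2 - m}` for `t ≥ 0`. -/
theorem stmt5 (b δ : ℝ) (hb : b ≠ 0) (hδ : |δ| ≤ 1) (l m : ℕ)
    (p : ENNReal) (hp : 1 ≤ p) :
    ∃ C > (0 : ℝ), ∀ t : ℝ, 0 ≤ t →
      eLpNorm
        (fun x => iteratedDeriv l (fun x' => iteratedDeriv m (fun t' => chi b δ t' x') t) x)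
        p volume ≤
        ENNReal.ofReal
          (C * |δ| * (1 + t) ^ (-(1 / 2 : ℝ) * (1 - (1 / p).toReal) - (l : ℝ) / 2 - (m : ℝ))) := by
  classical
  obtain ⟨C0, hC0pos, hC0⟩ := ((good_psi b m).iteratedDeriv l).bound
  refine ⟨C0 * Real.sqrt (8 * π), by positivity, fun t ht => ?_⟩
  have h1t : (0:ℝ) < 1 + t := by linarith
  set σ := Real.sqrt (1 + t) with hσdef
  have hσ1 : (1:ℝ) ≤ σ := by
    have h := Real.sqrt_le_sqrt (show (1:ℝ) ≤ 1 + t by linarith)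
    rwa [Real.sqrt_one] at h
  have hσ0 : (0:ℝ) < σ := lt_of_lt_of_le one_pos hσ1
  set c : ℝ := -(1/2 : ℝ) - m with hc
  have hA0 : (0:ℝ) < (1 + t) ^ c := Real.rpow_pos_of_pos h1t c
  have hinner : (fun x' => iteratedDeriv m (fun t' => chi b δ t' x') t)
      = fun x' => (1 + t) ^ c * psi b m δ (x' / σ) := by
    funext x'
    exact time_deriv b δ x' m t (by linarith)
  have houter : ∀ x, iteratedDeriv l (fun x' => iteratedDeriv m (fun t' => chi b δ t' x') t) x
      = (1 + t) ^ c * σ⁻¹ ^ l * iteratedDeriv l (psi b m δ) (x / σ) := by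
    intro x
    rw [hinner]
    exact iterated_scale σ hσ0.ne' l (psi b m δ) (psi_contDiff b δ m) _ x
  set M : ℝ := (1 + t) ^ c * σ⁻¹ ^ l * (C0 * |δ|) with hM
  have hM0 : 0 ≤ M := by positivity
  have hbd : ∀ x, |iteratedDeriv l (fun x' => iteratedDeriv m (fun t' => chi b δ t' x') t) x|
      ≤ M * Real.exp (-x ^ 2 / (8 * σ ^ 2)) := by
    intro x
    rw [houter x, abs_mul, abs_mul]
    have h1 := hC0 δ hδ (x / σ)
    have he : Real.exp (-(x / σ) ^ 2 / 8) = Real.exp (-x ^ 2 / (8 * σ ^ 2)) := by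
      congr 1; field_simp
    rw [abs_of_pos hA0, abs_of_nonneg (by positivity : (0:ℝ) ≤ σ⁻¹ ^ l), hM]
    calc (1 + t) ^ c * σ⁻¹ ^ l * |iteratedDeriv l (psi b m δ) (x / σ)|
        ≤ (1 + t) ^ c * σ⁻¹ ^ l * (C0 * |δ| * Real.exp (-(x / σ) ^ 2 / 8)) := by
          apply mul_le_mul_of_nonneg_left h1 (by positivity)
      _ = (1 + t) ^ c * σ⁻¹ ^ l * (C0 * |δ|) * Real.exp (-x ^ 2 / (8 * σ ^ 2)) := by
          rw [← he]; ring
  refine (key_eLpNorm _ M σ hM0 hσ1 hbd p hp).trans (le_of_eq ?_)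
  congr 1
  set r : ℝ := ((1:ENNReal)/p).toReal with hr
  have hsqeq : σ = (1 + t) ^ ((1:ℝ)/2) := Real.sqrt_eq_rpow (1 + t)
  have h2 : σ⁻¹ ^ l = (1 + t) ^ (-(l:ℝ)/2) := by
    rw [hsqeq, ← Real.rpow_neg h1t.le, ← Real.rpow_natCast ((1+t) ^ (-((1:ℝ)/2))) l,
      ← Real.rpow_mul h1t.le]
    congr 1; push_cast; ring
  have h3 : σ ^ r = (1 + t) ^ (r/2) := by
    rw [hsqeq, ← Real.rpow_mul h1t.le]
    congr 1; ring
  have h4 : (1 + t) ^ c * (1 + t) ^ (-(l:ℝ)/2) * (1 + t) ^ (r/2)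
      = (1 + t) ^ (-(1 / 2 : ℝ) * (1 - r) - (l : ℝ) / 2 - (m : ℝ)) := by
    rw [← Real.rpow_add h1t, ← Real.rpow_add h1t]
    congr 1; rw [hc]; push_cast; ring
  calc M * Real.sqrt (8 * π) * σ ^ r
      = (C0 * |δ| * Real.sqrt (8 * π))
        * ((1 + t) ^ c * (1 + t) ^ (-(l:ℝ)/2) * (1 + t) ^ (r/2)) := by
        rw [hM, h2, h3]; ring
    _ = C0 * Real.sqrt (8 * π) * |δ|
        * (1 + t) ^ (-(1 / 2 : ℝ) * (1 - r) - (l : ℝ) / 2 - (m : ℝ)) := by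
        rw [h4]; ring
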